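/- arXiv:1407.2415 — 2 statements merged into one kernel-verified Lean document; each statement's English description precedes it below -/
import Mathlib

section
/- KYP-type sufficiency (discrete-time bounded real lemma, LMI ⇒ norm bound): Suppose A ∈ ℝ^{n×n}, B ∈ ℝ^{n×p}, C ∈ ℝ^{q×n}, D ∈ ℝ^{q×p}, γ > 0, and there exists a symmetric positive definite X ∈ ℝ^{n×n} such that the block matrix [[AᵀXA − X, AᵀXB, Cᵀ],[BᵀXA, BᵀXB − γI, Dᵀ],[C, D, −γI]] is negative definite. Then for every θ ∈ ℝ, the matrix e^{iθ}I − A is invertible and the largest singular value of G(e^{iθ}) = C(e^{iθ}I − A)^{-1}B + D is strictly less than γ. -/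
open Matrix

section KYPaux
variable {m k : Type*} [Fintype m] [Fintype k]

set_option linter.unusedSectionVars false

lemma kyp_star_sum_elim {α : Type*} [Star α] (x : m → α) (y : k → α) :
    star (Sum.elim x y) = Sum.elim (star x) (star y) := by
  funext i; cases i <;> rfl

lemma kyp_real_mulVec_star (M : Matrix m k ℝ) (x : k → ℂ) :
    M.map Complex.ofReal *ᵥ star x = star (M.map Complex.ofReal *ᵥ x) := by
  funext i
  simp only [Matrix.mulVec, dotProduct, Matrix.map_apply, Pi.star_apply]
  rw [show (star (∑ j, (M i j : ℂ) * x j) : ℂ) = (starRingEnd ℂ) (∑ j, (M i j : ℂ) * x j) from rfl,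
    map_sum]
  refine Finset.sum_congr rfl fun j _ => ?_
  simp [mul_comm]

lemma kyp_dot_transpose (M : Matrix m k ℝ) (x : k → ℂ) (y : m → ℂ) :
    star x ⬝ᵥ ((M.map Complex.ofReal)ᵀ *ᵥ y) = star (M.map Complex.ofReal *ᵥ x) ⬝ᵥ y := by
  rw [Matrix.dotProduct_mulVec, Matrix.vecMul_transpose, kyp_real_mulVec_star]

lemma kyp_star_dot_self (v : k → ℂ) : star v ⬝ᵥ v = ((∑ i, ‖v i‖ ^ 2 : ℝ) : ℂ) := by
  simp only [dotProduct, Pi.star_apply, Complex.ofReal_sum]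
  refine Finset.sum_congr rfl fun i _ => ?_
  rw [show (star (v i) : ℂ) = (starRingEnd ℂ) (v i) from rfl, mul_comm, Complex.mul_conj']
  simp [Complex.normSq_eq_norm_sq]

lemma kyp_re_quadform_pos {P : Matrix k k ℝ} (hP : P.PosDef) (u : k → ℂ) (hu : u ≠ 0) :
    0 < (star u ⬝ᵥ (P.map Complex.ofReal *ᵥ u)).re := by
  set a : k → ℝ := fun i => (u i).re with ha
  set b : k → ℝ := fun i => (u i).im with hb
  have key : (star u ⬝ᵥ (P.map Complex.ofReal *ᵥ u)).re = a ⬝ᵥ P *ᵥ a + b ⬝ᵥ P *ᵥ b := by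
    simp only [dotProduct, Matrix.mulVec, Matrix.map_apply, Pi.star_apply,
      Finset.mul_sum, Complex.re_sum, ← Finset.sum_add_distrib]
    refine Finset.sum_congr rfl fun i _ => ?_
    refine Finset.sum_congr rfl fun j _ => ?_
    simp only [Complex.mul_re, Complex.re_ofReal_mul, Complex.im_ofReal_mul,
      RCLike.star_def, Complex.conj_re, Complex.conj_im, Complex.ofReal_re, Complex.ofReal_im,
      ha, hb]
    ring
  rw [key]
  rcases eq_or_ne a 0 with haz | haz
  · have hbz : b ≠ 0 := by
      intro hbz
      apply hu; funext i
      exact Complex.ext (congrFun haz i) (congrFun hbz i)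
    have h1 : 0 ≤ a ⬝ᵥ P *ᵥ a := by simpa using hP.posSemidef.dotProduct_mulVec_nonneg a
    have h2 : 0 < b ⬝ᵥ P *ᵥ b := by simpa using hP.dotProduct_mulVec_pos hbz
    linarith
  · have h1 : 0 < a ⬝ᵥ P *ᵥ a := by simpa using hP.dotProduct_mulVec_pos haz
    have h2 : 0 ≤ b ⬝ᵥ P *ᵥ b := by simpa using hP.posSemidef.dotProduct_mulVec_nonneg b
    linarith

end KYPaux

/-- Discrete-time bounded real lemma (KYP sufficiency): if the KYP LMI holds for some
symmetric positive definite X, then for every θ the matrix e^{iθ}I − A is invertible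
and the largest singular value of G(e^{iθ}) = C(e^{iθ}I − A)⁻¹B + D is < γ
(equivalently, ‖G(e^{iθ})v‖ < γ‖v‖ for every nonzero v). -/
theorem stmt9 (n p q : ℕ) (A : Matrix (Fin n) (Fin n) ℝ) (B : Matrix (Fin n) (Fin p) ℝ)
    (C : Matrix (Fin q) (Fin n) ℝ) (D : Matrix (Fin q) (Fin p) ℝ) (γ : ℝ) (hγ : 0 < γ)
    (X : Matrix (Fin n) (Fin n) ℝ) (hXsymm : X.IsSymm) (hX : X.PosDef)
    (hLMI : (-(Matrix.fromBlocks
        (Matrix.fromBlocks (Aᵀ * X * A - X) (Aᵀ * X * B) (Bᵀ * X * A)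
          (Bᵀ * X * B - γ • (1 : Matrix (Fin p) (Fin p) ℝ)))
        (Matrix.fromRows Cᵀ Dᵀ)
        (Matrix.fromCols C D)
        (-(γ • (1 : Matrix (Fin q) (Fin q) ℝ))))).PosDef) :
    ∀ θ : ℝ,
      IsUnit (Complex.exp (θ * Complex.I) • (1 : Matrix (Fin n) (Fin n) ℂ)
        - A.map (Complex.ofReal)) ∧
      ∀ v : Fin p → ℂ, v ≠ 0 →
        Real.sqrt (∑ i, ‖((C.map Complex.ofReal)
            * (Complex.exp (θ * Complex.I) • (1 : Matrix (Fin n) (Fin n) ℂ)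
                - A.map Complex.ofReal)⁻¹
            * (B.map Complex.ofReal) + D.map Complex.ofReal).mulVec v i‖ ^ 2)
          < γ * Real.sqrt (∑ j, ‖v j‖ ^ 2) := by
  intro θ
  set z := Complex.exp (θ * Complex.I) with hzdef
  have hz1 : star z * z = 1 := by
    rw [show (star z : ℂ) = (starRingEnd ℂ) z from rfl, ← Complex.normSq_eq_conj_mul_self,
      Complex.normSq_eq_norm_sq, hzdef, Complex.norm_exp_ofReal_mul_I]
    norm_num
  set M0 : Matrix ((Fin n ⊕ Fin p) ⊕ Fin q) ((Fin n ⊕ Fin p) ⊕ Fin q) ℝ :=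
    Matrix.fromBlocks
        (Matrix.fromBlocks (Aᵀ * X * A - X) (Aᵀ * X * B) (Bᵀ * X * A)
          (Bᵀ * X * B - γ • (1 : Matrix (Fin p) (Fin p) ℝ)))
        (Matrix.fromRows Cᵀ Dᵀ)
        (Matrix.fromCols C D)
        (-(γ • (1 : Matrix (Fin q) (Fin q) ℝ))) with hM0
  have hneg : ∀ u : (Fin n ⊕ Fin p) ⊕ Fin q → ℂ, u ≠ 0 →
      (star u ⬝ᵥ (M0.map Complex.ofReal *ᵥ u)).re < 0 := by
    intro u hu
    have h := kyp_re_quadform_pos hLMI u hu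
    have hmapneg : (-M0).map Complex.ofReal = -(M0.map Complex.ofReal) := by
      ext i j; simp
    rw [hmapneg, Matrix.neg_mulVec, dotProduct_neg, Complex.neg_re] at h
    linarith
  have hkey : ∀ (x : Fin n → ℂ) (v : Fin p → ℂ),
      A.map Complex.ofReal *ᵥ x + B.map Complex.ofReal *ᵥ v = z • x →
      (star (Sum.elim (Sum.elim x v)
          ((γ⁻¹ : ℝ) • (C.map Complex.ofReal *ᵥ x + D.map Complex.ofReal *ᵥ v))) ⬝ᵥ
        (M0.map Complex.ofReal *ᵥ Sum.elim (Sum.elim x v)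
          ((γ⁻¹ : ℝ) • (C.map Complex.ofReal *ᵥ x + D.map Complex.ofReal *ᵥ v)))).re
      = γ⁻¹ * (∑ i, ‖(C.map Complex.ofReal *ᵥ x + D.map Complex.ofReal *ᵥ v) i‖^2)
        - γ * (∑ j, ‖v j‖^2) := by
    intro x v hxv
    have hMc : (M0.map Complex.ofReal)
        = Matrix.fromBlocks
          (Matrix.fromBlocks ((A.map Complex.ofReal)ᵀ * X.map Complex.ofReal * A.map Complex.ofReal - X.map Complex.ofReal)
            ((A.map Complex.ofReal)ᵀ * X.map Complex.ofReal * B.map Complex.ofReal)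
            ((B.map Complex.ofReal)ᵀ * X.map Complex.ofReal * A.map Complex.ofReal)
            ((B.map Complex.ofReal)ᵀ * X.map Complex.ofReal * B.map Complex.ofReal - (γ:ℂ) • 1))
          (Matrix.fromRows (C.map Complex.ofReal)ᵀ (D.map Complex.ofReal)ᵀ)
          (Matrix.fromCols (C.map Complex.ofReal) (D.map Complex.ofReal))
          (-((γ:ℂ) • 1)) := by
      rw [hM0]
      ext i j
      rcases i with (i | i) | i <;> rcases j with (j | j) | j <;>
        simp [Matrix.fromBlocks, Matrix.fromRows_apply_inl, Matrix.fromRows_apply_inr, Matrix.fromCols, Matrix.mul_apply,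
          Matrix.one_apply, apply_ite, Matrix.map_apply, Finset.mul_sum] <;> split_ifs <;> simp_all
    rw [hMc]
    simp only [Matrix.fromBlocks_mulVec, Matrix.fromRows_mulVec, Matrix.fromCols_mulVec_sumElim,
      Matrix.sub_mulVec, Matrix.neg_mulVec, Matrix.smul_mulVec, Matrix.one_mulVec,
      dotProduct_add, dotProduct_sub, dotProduct_neg,
      sumElim_dotProduct_sumElim, Sum.elim_add_add, Sum.elim_comp_inl, Sum.elim_comp_inr,
      kyp_star_sum_elim]
    rw [show γ⁻¹ * (∑ i, ‖(C.map Complex.ofReal *ᵥ x + D.map Complex.ofReal *ᵥ v) i‖^2)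
        - γ * (∑ j, ‖v j‖^2)
        = (((γ⁻¹ * (∑ i, ‖(C.map Complex.ofReal *ᵥ x + D.map Complex.ofReal *ᵥ v) i‖^2)
        - γ * (∑ j, ‖v j‖^2) : ℝ) : ℂ)).re by norm_cast]
    refine congrArg Complex.re ?_
    have hw3 : star (C.map Complex.ofReal *ᵥ x + D.map Complex.ofReal *ᵥ v) ⬝ᵥ
        (C.map Complex.ofReal *ᵥ x + D.map Complex.ofReal *ᵥ v)
        = ((∑ i, ‖(C.map Complex.ofReal *ᵥ x + D.map Complex.ofReal *ᵥ v) i‖ ^ 2 : ℝ) : ℂ) :=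
      kyp_star_dot_self _
    have hw1 : star (C.map Complex.ofReal *ᵥ x + D.map Complex.ofReal *ᵥ v) ⬝ᵥ (C.map Complex.ofReal *ᵥ x)
        + star (C.map Complex.ofReal *ᵥ x + D.map Complex.ofReal *ᵥ v) ⬝ᵥ (D.map Complex.ofReal *ᵥ v)
        = ((∑ i, ‖(C.map Complex.ofReal *ᵥ x + D.map Complex.ofReal *ᵥ v) i‖ ^ 2 : ℝ) : ℂ) := by
      rw [← dotProduct_add]; exact hw3
    have hw2 : star (C.map Complex.ofReal *ᵥ x) ⬝ᵥ (C.map Complex.ofReal *ᵥ x + D.map Complex.ofReal *ᵥ v)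
        + star (D.map Complex.ofReal *ᵥ v) ⬝ᵥ (C.map Complex.ofReal *ᵥ x + D.map Complex.ofReal *ᵥ v)
        = ((∑ i, ‖(C.map Complex.ofReal *ᵥ x + D.map Complex.ofReal *ᵥ v) i‖ ^ 2 : ℝ) : ℂ) := by
      rw [← add_dotProduct, ← star_add]; exact hw3
    have hv : star v ⬝ᵥ v = ((∑ j, ‖v j‖ ^ 2 : ℝ) : ℂ) := kyp_star_dot_self _
    have hXX : star (A.map Complex.ofReal *ᵥ x) ⬝ᵥ (X.map Complex.ofReal *ᵥ (A.map Complex.ofReal *ᵥ x))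
        + star (A.map Complex.ofReal *ᵥ x) ⬝ᵥ (X.map Complex.ofReal *ᵥ (B.map Complex.ofReal *ᵥ v))
        + star (B.map Complex.ofReal *ᵥ v) ⬝ᵥ (X.map Complex.ofReal *ᵥ (A.map Complex.ofReal *ᵥ x))
        + star (B.map Complex.ofReal *ᵥ v) ⬝ᵥ (X.map Complex.ofReal *ᵥ (B.map Complex.ofReal *ᵥ v))
        = star x ⬝ᵥ (X.map Complex.ofReal *ᵥ x) := by
      have e1 : star (A.map Complex.ofReal *ᵥ x + B.map Complex.ofReal *ᵥ v) ⬝ᵥ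
          (X.map Complex.ofReal *ᵥ (A.map Complex.ofReal *ᵥ x + B.map Complex.ofReal *ᵥ v))
          = star x ⬝ᵥ (X.map Complex.ofReal *ᵥ x) := by
        rw [hxv, star_smul, Matrix.mulVec_smul, smul_dotProduct, dotProduct_smul,
          smul_smul, hz1, one_smul]
      rw [← e1, star_add, Matrix.mulVec_add, add_dotProduct, dotProduct_add,
        dotProduct_add]
      ring
    have hγ1 : (γ:ℂ) * (γ:ℂ)⁻¹ = 1 := by
      rw [mul_inv_cancel₀]; exact_mod_cast hγ.ne'
    simp only [← Matrix.mulVec_mulVec]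
    simp only [kyp_dot_transpose]
    simp only [star_smul, star_trivial, smul_dotProduct, dotProduct_smul,
      Complex.real_smul, smul_eq_mul]
    push_cast at hw1 hw2 hw3 hv ⊢
    linear_combination hXX + (γ:ℂ)⁻¹ * hw1 + (γ:ℂ)⁻¹ * hw2
      - ((γ:ℂ)*(γ:ℂ)⁻¹*(γ:ℂ)⁻¹) * hw3 - (γ:ℂ) * hv
      - ((1:ℂ) * (γ:ℂ)⁻¹ * (∑ i, ((‖(C.map Complex.ofReal *ᵥ x + D.map Complex.ofReal *ᵥ v) i‖ : ℂ) ^ 2))) * hγ1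
  -- invertibility
  have hunit : IsUnit (z • (1 : Matrix (Fin n) (Fin n) ℂ) - A.map Complex.ofReal) := by
    rw [Matrix.isUnit_iff_isUnit_det, isUnit_iff_ne_zero]
    intro hdet
    obtain ⟨x, hx0, hx⟩ := (Matrix.exists_mulVec_eq_zero_iff).2 hdet
    rw [Matrix.sub_mulVec, Matrix.smul_mulVec, Matrix.one_mulVec, sub_eq_zero] at hx
    have hxv : A.map Complex.ofReal *ᵥ x + B.map Complex.ofReal *ᵥ (0 : Fin p → ℂ) = z • x := by
      rw [Matrix.mulVec_zero, add_zero, hx]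
    have h2 := hneg _ (show Sum.elim (Sum.elim x (0 : Fin p → ℂ))
        ((γ⁻¹ : ℝ) • (C.map Complex.ofReal *ᵥ x + D.map Complex.ofReal *ᵥ (0 : Fin p → ℂ))) ≠ 0 by
      intro h
      exact hx0 (funext fun i => congrFun h (Sum.inl (Sum.inl i))))
    rw [hkey x 0 hxv] at h2
    have hz0 : (∑ j, ‖(0 : Fin p → ℂ) j‖ ^ 2) = 0 := by simp
    have hWnn : 0 ≤ ∑ i, ‖(C.map Complex.ofReal *ᵥ x + D.map Complex.ofReal *ᵥ (0 : Fin p → ℂ)) i‖ ^ 2 :=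
      Finset.sum_nonneg fun i _ => sq_nonneg _
    rw [hz0] at h2
    have : 0 ≤ γ⁻¹ * ∑ i, ‖(C.map Complex.ofReal *ᵥ x + D.map Complex.ofReal *ᵥ (0 : Fin p → ℂ)) i‖ ^ 2 :=
      mul_nonneg (inv_nonneg.2 hγ.le) hWnn
    linarith
  refine ⟨hunit, fun v hv0 => ?_⟩
  set E := z • (1 : Matrix (Fin n) (Fin n) ℂ) - A.map Complex.ofReal with hE
  set x := E⁻¹ *ᵥ (B.map Complex.ofReal *ᵥ v) with hxdef
  have hEx : E *ᵥ x = B.map Complex.ofReal *ᵥ v := by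
    rw [hxdef, Matrix.mulVec_mulVec, Matrix.mul_nonsing_inv _ ((Matrix.isUnit_iff_isUnit_det E).mp hunit),
      Matrix.one_mulVec]
  have hxv : A.map Complex.ofReal *ᵥ x + B.map Complex.ofReal *ᵥ v = z • x := by
    rw [← hEx, hE, Matrix.sub_mulVec, Matrix.smul_mulVec, Matrix.one_mulVec]
    abel
  have hGv : ((C.map Complex.ofReal) * E⁻¹ * (B.map Complex.ofReal) + D.map Complex.ofReal) *ᵥ v
      = C.map Complex.ofReal *ᵥ x + D.map Complex.ofReal *ᵥ v := by
    rw [Matrix.add_mulVec, ← Matrix.mulVec_mulVec, ← Matrix.mulVec_mulVec, hxdef]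
  have h2 := hneg _ (show Sum.elim (Sum.elim x v)
      ((γ⁻¹ : ℝ) • (C.map Complex.ofReal *ᵥ x + D.map Complex.ofReal *ᵥ v)) ≠ 0 by
    intro h
    exact hv0 (funext fun j => congrFun h (Sum.inl (Sum.inr j))))
  rw [hkey x v hxv] at h2
  have hWnn : 0 ≤ ∑ i, ‖(C.map Complex.ofReal *ᵥ x + D.map Complex.ofReal *ᵥ v) i‖ ^ 2 :=
    Finset.sum_nonneg fun i _ => sq_nonneg _
  have hVpos : 0 < ∑ j, ‖v j‖ ^ 2 := by
    obtain ⟨j0, hj0⟩ := Function.ne_iff.mp hv0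
    exact Finset.sum_pos' (fun j _ => sq_nonneg _)
      ⟨j0, Finset.mem_univ _, pow_pos (norm_pos_iff.mpr hj0) 2⟩
  have h3 : (∑ i, ‖(C.map Complex.ofReal *ᵥ x + D.map Complex.ofReal *ᵥ v) i‖ ^ 2)
      < γ ^ 2 * ∑ j, ‖v j‖ ^ 2 := by
    have h4 := mul_lt_mul_of_pos_left h2 hγ
    rw [mul_zero, mul_sub, ← mul_assoc, mul_inv_cancel₀ hγ.ne', one_mul] at h4
    nlinarith
  calc Real.sqrt (∑ i, ‖((C.map Complex.ofReal) * E⁻¹ * (B.map Complex.ofReal)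
        + D.map Complex.ofReal).mulVec v i‖ ^ 2)
      = Real.sqrt (∑ i, ‖(C.map Complex.ofReal *ᵥ x + D.map Complex.ofReal *ᵥ v) i‖ ^ 2) := by
        rw [show ((C.map Complex.ofReal) * E⁻¹ * (B.map Complex.ofReal)
          + D.map Complex.ofReal).mulVec v = C.map Complex.ofReal *ᵥ x + D.map Complex.ofReal *ᵥ v
          from hGv]
    _ < Real.sqrt (γ ^ 2 * ∑ j, ‖v j‖ ^ 2) := Real.sqrt_lt_sqrt hWnn h3
    _ = γ * Real.sqrt (∑ j, ‖v j‖ ^ 2) := by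
        rw [Real.sqrt_mul (sq_nonneg γ), Real.sqrt_sq hγ.le]
end

section
/- If there exists a symmetric positive definite matrix X such that AᵀXA − X is negative definite, then every eigenvalue of A has absolute value strictly less than 1 (A is Schur stable). -/
open Matrix Complex
open scoped ComplexOrder

lemma aux_posDef_map {n : ℕ} {M : Matrix (Fin n) (Fin n) ℝ} (hM : M.PosDef) :
    (M.map Complex.ofReal).PosDef := by
  refine Matrix.PosDef.of_dotProduct_mulVec_pos (hM.1.map _ (fun r => (Complex.conj_ofReal r).symm)) ?_
  intro x hx
  set a : Fin n → ℝ := fun i => (x i).re with ha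
  set b : Fin n → ℝ := fun i => (x i).im with hb
  set va : Fin n → ℂ := fun i => ((a i : ℂ)) with hva
  set vb : Fin n → ℂ := fun i => ((b i : ℂ)) with hvb
  have hxd : x = va + Complex.I • vb := by
    funext i
    simp [hva, hvb, ha, hb, Complex.ext_iff]
  have hmva : (M.map Complex.ofReal) *ᵥ va = fun i => ((M *ᵥ a) i : ℂ) := by
    funext i
    simp only [Matrix.mulVec, dotProduct, Matrix.map_apply, hva]
    push_cast
    rfl
  have hmvb : (M.map Complex.ofReal) *ᵥ vb = fun i => ((M *ᵥ b) i : ℂ) := by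
    funext i
    simp only [Matrix.mulVec, dotProduct, Matrix.map_apply, hvb]
    push_cast
    rfl
  have hsa : star va = va := by funext i; simp [hva, Complex.conj_ofReal]
  have hsb : star vb = vb := by funext i; simp [hvb, Complex.conj_ofReal]
  have hdaa : va ⬝ᵥ (fun i => ((M *ᵥ a) i : ℂ)) = ((a ⬝ᵥ (M *ᵥ a) : ℝ) : ℂ) := by
    simp [dotProduct, hva]
  have hdbb : vb ⬝ᵥ (fun i => ((M *ᵥ b) i : ℂ)) = ((b ⬝ᵥ (M *ᵥ b) : ℝ) : ℂ) := by
    simp [dotProduct, hvb]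
  have hdab : va ⬝ᵥ (fun i => ((M *ᵥ b) i : ℂ)) = ((a ⬝ᵥ (M *ᵥ b) : ℝ) : ℂ) := by
    simp [dotProduct, hva]
  have hdba : vb ⬝ᵥ (fun i => ((M *ᵥ a) i : ℂ)) = ((b ⬝ᵥ (M *ᵥ a) : ℝ) : ℂ) := by
    simp [dotProduct, hvb]
  have hMt : Mᵀ = M := by
    ext i j
    exact hM.1.apply i j
  have hsymm : a ⬝ᵥ (M *ᵥ b) = b ⬝ᵥ (M *ᵥ a) := by
    rw [Matrix.dotProduct_mulVec, ← Matrix.mulVec_transpose, hMt, dotProduct_comm]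
  have key : star x ⬝ᵥ (M.map Complex.ofReal) *ᵥ x
      = ((a ⬝ᵥ (M *ᵥ a) + b ⬝ᵥ (M *ᵥ b) : ℝ) : ℂ) := by
    rw [hxd]
    rw [star_add, star_smul, hsa, hsb]
    rw [Matrix.mulVec_add, Matrix.mulVec_smul, hmva, hmvb]
    rw [dotProduct_add, add_dotProduct, add_dotProduct,
      smul_dotProduct, smul_dotProduct, dotProduct_smul,
      dotProduct_smul, hdaa, hdbb, hdab, hdba, hsymm]
    push_cast
    simp [Complex.ext_iff]
  rw [key]
  have hab : a ≠ 0 ∨ b ≠ 0 := by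
    by_contra h
    push_neg at h
    apply hx
    funext i
    have h1 := congrFun h.1 i
    have h2 := congrFun h.2 i
    simp [ha, hb] at h1 h2
    exact Complex.ext h1 h2
  have hpos : 0 < a ⬝ᵥ (M *ᵥ a) + b ⬝ᵥ (M *ᵥ b) := by
    have h1 : 0 ≤ a ⬝ᵥ (M *ᵥ a) := by simpa using hM.posSemidef.dotProduct_mulVec_nonneg a
    have h2 : 0 ≤ b ⬝ᵥ (M *ᵥ b) := by simpa using hM.posSemidef.dotProduct_mulVec_nonneg b
    rcases hab with h | h
    · have := hM.dotProduct_mulVec_pos h; simp at this; linarith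
    · have := hM.dotProduct_mulVec_pos h; simp at this; linarith
  exact_mod_cast hpos

/-- Lyapunov inequality implies Schur stability: if X ≻ 0 is symmetric with
AᵀXA − X ≺ 0, then every (complex) eigenvalue of A has modulus < 1. -/
theorem stmt10 (n : ℕ) (A X : Matrix (Fin n) (Fin n) ℝ)
    (hXsymm : X.IsSymm) (hX : X.PosDef) (hLyap : (-(Aᵀ * X * A - X)).PosDef) :
    ∀ μ : ℂ, μ ∈ spectrum ℂ (A.map Complex.ofReal) → ‖μ‖ < 1 := by
  intro μ hμ
  set Ac := A.map Complex.ofReal with hAc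
  set Xc := X.map Complex.ofReal with hXc
  -- eigenvector
  rw [spectrum.mem_iff] at hμ
  rw [Matrix.isUnit_iff_isUnit_det, isUnit_iff_ne_zero, not_not] at hμ
  obtain ⟨v, hv0, hv⟩ := (Matrix.exists_mulVec_eq_zero_iff).mpr hμ
  have heig : Ac *ᵥ v = μ • v := by
    have := hv
    rw [Algebra.algebraMap_eq_smul_one, Matrix.sub_mulVec, sub_eq_zero] at this
    rw [← this, Matrix.smul_mulVec, Matrix.one_mulVec]
  -- complexified matrices
  have hXcpd : Xc.PosDef := aux_posDef_map hX
  have hLc : ((-(Aᵀ * X * A - X)).map Complex.ofReal) = Xc - Acᵀ * Xc * Ac := by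
    have : (-(Aᵀ * X * A - X)).map Complex.ofReal
        = (Matrix.map · Complex.ofRealHom) (-(Aᵀ * X * A - X)) := rfl
    ext i j
    simp [Matrix.map_apply, hAc, hXc, Matrix.mul_apply, Matrix.transpose_apply]
  have hLcpd : (Xc - Acᵀ * Xc * Ac).PosDef := hLc ▸ aux_posDef_map hLyap
  -- conj transpose fact
  have hAcT : star v ᵥ* Acᵀ = Ac *ᵥ star v := Matrix.vecMul_transpose ..
  have hstar : Ac *ᵥ star v = star (Ac *ᵥ v) := by
    have hH : Acᴴ = Acᵀ := by
      ext i j; simp [hAc, Matrix.conjTranspose_apply, Complex.conj_ofReal]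
    rw [Matrix.star_mulVec, hH, Matrix.vecMul_transpose]
  set c : ℂ := star v ⬝ᵥ Xc *ᵥ v with hc
  have hcpos : 0 < c := hXcpd.dotProduct_mulVec_pos hv0
  have hquad : star v ⬝ᵥ (Acᵀ * Xc * Ac) *ᵥ v = (starRingEnd ℂ) μ * μ * c := by
    rw [← Matrix.mulVec_mulVec, ← Matrix.mulVec_mulVec]
    rw [Matrix.dotProduct_mulVec, hAcT, hstar, heig]
    rw [Matrix.mulVec_smul, star_smul, smul_dotProduct, dotProduct_smul, hc]
    simp [smul_smul]
    ring
  have hLval : star v ⬝ᵥ (Xc - Acᵀ * Xc * Ac) *ᵥ v = (1 - (Complex.normSq μ : ℂ)) * c := by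
    rw [Matrix.sub_mulVec, dotProduct_sub, hquad, ← hc]
    rw [Complex.normSq_eq_conj_mul_self]
    ring
  have hLpos : 0 < (1 - (Complex.normSq μ : ℂ)) * c := hLval ▸ hLcpd.dotProduct_mulVec_pos hv0
  -- extract real inequality
  have hcim : c.im = 0 := by
    have := Complex.lt_def.mp hcpos
    exact this.2.symm
  have hcre : 0 < c.re := (Complex.lt_def.mp hcpos).1
  have hre : 0 < ((1 - (Complex.normSq μ : ℂ)) * c).re := (Complex.lt_def.mp hLpos).1
  rw [Complex.mul_re] at hre
  simp [hcim] at hre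
  have hns : Complex.normSq μ < 1 := by nlinarith
  have habs : (‖μ‖) ^ 2 < 1 := by rwa [Complex.sq_norm]
  nlinarith [norm_nonneg μ]
end
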